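/- For all dimensions d ≥ 1 and all α ∈ (0,2), one has |A(d,α)·ω_{d-1}/(d(2-α)) − 1| ≤ C·log(1+d)·(2−α), where C is a constant independent of d and α. -/

import Mathlib

open Real

lemma gamma_upper {s : ℝ} (h0 : 0 ≤ s) (h1 : s ≤ 1) : Gamma (1 + s) ≤ 1 := by
  have h := Real.convexOn_Gamma.2 (x := 1) (y := 2) (by norm_num) (by norm_num)
    (by linarith : (0:ℝ) ≤ 1 - s) h0 (by ring)
  have e : (1 - s) • (1:ℝ) + s • (2:ℝ) = 1 + s := by simp [smul_eq_mul]; ring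
  rw [e, smul_eq_mul, smul_eq_mul, Real.Gamma_one, Real.Gamma_two] at h
  linarith

lemma gamma_lower1 {s : ℝ} (h0 : 0 < s) (h1 : s ≤ 1) : 1 - 2*s ≤ Gamma (1 + s) := by
  have h := Real.convexOn_Gamma.slope_mono_adjacent (x := 1/2) (y := 1) (z := 1 + s)
    (by norm_num) (by norm_num; linarith) (by norm_num) (by linarith)
  rw [Real.Gamma_one, Real.Gamma_one_half_eq] at h
  have hπ : Real.sqrt π ≤ 2 := by
    rw [show (2:ℝ) = Real.sqrt 4 by rw [show (4:ℝ) = 2^2 by norm_num, Real.sqrt_sq]; norm_num]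
    exact Real.sqrt_le_sqrt (by linarith [Real.pi_le_four])
  have h3 : (-2 : ℝ) ≤ (Gamma (1+s) - 1) / s := by
    calc (-2:ℝ) ≤ (1 - Real.sqrt π) / (1 - 1/2) := by
            rw [show (1:ℝ) - 1/2 = 1/2 by norm_num]; linarith [hπ]
      _ ≤ _ := by simpa using h
  have h4 := (le_div_iff₀ h0).mp h3
  linarith

lemma gamma_lower2 {s : ℝ} (h0 : 0 < s) (h1 : s < 1) : s ≤ Gamma (1 + s) := by
  have h := Real.convexOn_Gamma.slope_mono_adjacent (x := 1 + s) (y := 2) (z := 3)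
    (by norm_num; linarith) (by norm_num) (by linarith) (by norm_num)
  have hG3 : Gamma (3:ℝ) = 2 := by
    rw [show (3:ℝ) = (2:ℕ) + 1 by norm_num, Real.Gamma_nat_eq_factorial]; norm_num
  rw [Real.Gamma_two, hG3] at h
  have h2 : (1 - Gamma (1 + s)) / (1 - s) ≤ 1 := by
    calc (1 - Gamma (1+s)) / (1 - s) = (Gamma 2 - Gamma (1+s)) / (2 - (1+s)) := by
            rw [Real.Gamma_two]; ring_nf
      _ ≤ (2 - 1) / (3 - 2) := by simpa [Real.Gamma_two, hG3] using h
      _ = 1 := by norm_num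
  have h4 := (div_le_one (by linarith : (0:ℝ) < 1 - s)).mp h2
  linarith

lemma gamma_lower3 {s : ℝ} (h0 : 0 < s) (h1 : s < 1) : (1:ℝ)/3 ≤ Gamma (1 + s) := by
  rcases le_total s (1/3) with h | h
  · linarith [gamma_lower1 h0 h1.le]
  · linarith [gamma_lower2 h0 h1]

lemma logconv {p q t : ℝ} (ha : 0 < p) (hb : 0 < q) (ht0 : 0 ≤ t) (ht1 : t ≤ 1) :
    Gamma (t*p + (1-t)*q) ≤ Gamma p ^ t * Gamma q ^ (1-t) := by
  have h := Real.convexOn_log_Gamma.2 (x := p) (y := q) ha hb ht0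
    (show (0:ℝ) ≤ 1 - t by linarith) (show t + (1-t) = 1 by ring)
  have e : t • p + (1-t) • q = t*p + (1-t)*q := by simp [smul_eq_mul]
  rw [e] at h
  simp only [Function.comp_apply, smul_eq_mul] at h
  have hpos : 0 < Gamma (t*p + (1-t)*q) := by
    apply Real.Gamma_pos_of_pos
    nlinarith [mul_nonneg ht0 ha.le, mul_nonneg (by linarith : (0:ℝ) ≤ 1-t) hb.le,
      mul_pos ha hb]
  calc Gamma (t*p + (1-t)*q) = Real.exp (Real.log (Gamma (t*p + (1-t)*q))) :=
        (Real.exp_log hpos).symm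
    _ ≤ Real.exp (t * Real.log (Gamma p) + (1-t) * Real.log (Gamma q)) :=
        Real.exp_le_exp.mpr h
    _ = Gamma p ^ t * Gamma q ^ (1-t) := by
        rw [Real.exp_add, Real.rpow_def_of_pos (Real.Gamma_pos_of_pos ha),
          Real.rpow_def_of_pos (Real.Gamma_pos_of_pos hb)]
        ring_nf

lemma ratio_upper {x s : ℝ} (hx : 0 < x) (hs0 : 0 ≤ s) (hs1 : s ≤ 1) :
    Gamma (x+1-s) * x ^ s ≤ Gamma (x+1) := by
  have h := logconv (p := x) (q := x+1) hx (by linarith) hs0 hs1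
  have e : s*x + (1-s)*(x+1) = x+1-s := by ring
  rw [e] at h
  have hxs : (0:ℝ) ≤ x ^ s := (Real.rpow_pos_of_pos hx s).le
  calc Gamma (x+1-s) * x ^ s ≤ (Gamma x ^ s * Gamma (x+1) ^ (1-s)) * x ^ s := by
        exact mul_le_mul_of_nonneg_right h hxs
    _ = (x * Gamma x) ^ s * Gamma (x+1) ^ (1-s) := by
        rw [Real.mul_rpow hx.le (Real.Gamma_pos_of_pos hx).le]; ring
    _ = Gamma (x+1) ^ s * Gamma (x+1) ^ (1-s) := by
        rw [← Real.Gamma_add_one hx.ne']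
    _ = Gamma (x+1) := by
        rw [← Real.rpow_add (Real.Gamma_pos_of_pos (by linarith : (0:ℝ) < x+1))]
        norm_num

lemma ratio_lower {x s : ℝ} (hx : 0 < x) (hs0 : 0 ≤ s) (hs1 : s ≤ 1) :
    Gamma (x+1) ≤ Gamma (x+1-s) * (x+1-s) ^ s := by
  have hpos : (0:ℝ) < x+1-s := by linarith
  have h := logconv (p := x+2-s) (q := x+1-s) (by linarith) hpos hs0 hs1
  have e : s*(x+2-s) + (1-s)*(x+1-s) = x+1 := by ring
  rw [e] at h
  have hG : Gamma (x+2-s) = (x+1-s) * Gamma (x+1-s) := by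
    rw [show x+2-s = (x+1-s)+1 by ring, Real.Gamma_add_one hpos.ne']
  have hGp : 0 < Gamma (x+1-s) := Real.Gamma_pos_of_pos hpos
  calc Gamma (x+1) ≤ Gamma (x+2-s) ^ s * Gamma (x+1-s) ^ (1-s) := h
    _ = (x+1-s) ^ s * (Gamma (x+1-s) ^ s * Gamma (x+1-s) ^ (1-s)) := by
        rw [hG, Real.mul_rpow hpos.le hGp.le]; ring
    _ = (x+1-s) ^ s * Gamma (x+1-s) := by
        rw [← Real.rpow_add hGp]; norm_num
    _ = Gamma (x+1-s) * (x+1-s) ^ s := by ring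

lemma exp_upper {u : ℝ} (h0 : 0 ≤ u) (h1 : u ≤ 3/4) : Real.exp u ≤ 1 + 4*u := by
  have e1 : Real.exp u * Real.exp (-u) = 1 := by rw [← Real.exp_add]; simp
  have e2 : 1 - u ≤ Real.exp (-u) := by linarith [Real.add_one_le_exp (-u)]
  nlinarith [Real.exp_pos u, mul_le_mul_of_nonneg_left e2 (Real.exp_pos u).le]

set_option maxHeartbeats 1000000 in
lemma key_bound {x s : ℝ} (hx : 1/2 ≤ x) (hs0 : 0 < s) (hs1 : s < 1) :
    |(1-s) * ((4:ℝ)^s)⁻¹ * (Gamma (x+1-s)/Gamma (x+1)) * (Gamma (1+s))⁻¹ - 1|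
      ≤ 39*s + 3*Real.log (x+1)*s := by
  have hx0 : (0:ℝ) < x := by linarith
  have hGx1 : 0 < Gamma (x+1) := Real.Gamma_pos_of_pos (by linarith)
  have hGxs : 0 < Gamma (x+1-s) := Real.Gamma_pos_of_pos (by linarith)
  have hGs : 0 < Gamma (1+s) := Real.Gamma_pos_of_pos (by linarith)
  set L : ℝ := Real.log (x+1) with hL
  have hL0 : 0 ≤ L := Real.log_nonneg (by linarith)
  set a : ℝ := 1 - s with hadef
  set b : ℝ := ((4:ℝ)^s)⁻¹ with hbdef
  set c : ℝ := Gamma (x+1-s)/Gamma (x+1) with hcdef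
  set g : ℝ := (Gamma (1+s))⁻¹ with hgdef
  -- bounds on a
  have ha0 : 0 < a := by simp only [hadef]; linarith
  have ha1 : a ≤ 1 := by simp only [hadef]; linarith
  -- bounds on b
  have h4s : (1:ℝ) ≤ (4:ℝ)^s := Real.one_le_rpow (by norm_num) hs0.le
  have h4sp : (0:ℝ) < (4:ℝ)^s := Real.rpow_pos_of_pos (by norm_num) s
  have hb0 : 0 < b := by positivity
  have hb1 : b ≤ 1 := by
    rw [hbdef, inv_le_one_iff₀]; right; exact h4s
  have hbd : 1 - b ≤ 3*s := by
    have hlog4 : Real.log 4 ≤ 3 := by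
      have := Real.log_le_sub_one_of_pos (show (0:ℝ) < 4 by norm_num); linarith
    have : b = Real.exp (-(Real.log 4 * s)) := by
      rw [hbdef, Real.rpow_def_of_pos (by norm_num : (0:ℝ) < 4), ← Real.exp_neg]
    rw [this]
    have := Real.add_one_le_exp (-(Real.log 4 * s))
    have hl40 : 0 ≤ Real.log 4 := Real.log_nonneg (by norm_num)
    nlinarith
  -- bounds on c
  have h2s : (2:ℝ)^s ≤ 2 := by
    calc (2:ℝ)^s ≤ (2:ℝ)^(1:ℝ) :=
          Real.rpow_le_rpow_of_exponent_le one_le_two hs1.le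
      _ = 2 := Real.rpow_one 2
  have hxs_pos : (0:ℝ) < x ^ s := Real.rpow_pos_of_pos hx0 s
  have hc_ub2 : c ≤ (2:ℝ)^s := by
    have h1 := ratio_upper hx0 hs0.le hs1.le
    have hhalf : ((2:ℝ)^s)⁻¹ ≤ x ^ s := by
      have : ((1:ℝ)/2) ^ s ≤ x ^ s := Real.rpow_le_rpow (by norm_num) hx hs0.le
      rwa [show ((1:ℝ)/2) = (2:ℝ)⁻¹ by norm_num, Real.inv_rpow (by norm_num : (0:ℝ) ≤ 2)] at this
    rw [hcdef, div_le_iff₀ hGx1]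
    calc Gamma (x+1-s) = Gamma (x+1-s) * x^s * (x^s)⁻¹ := by field_simp
      _ ≤ Gamma (x+1) * (x^s)⁻¹ := by gcongr
      _ ≤ Gamma (x+1) * (2:ℝ)^s := by
          gcongr
          rw [inv_le_comm₀ hxs_pos (by positivity)]
          exact hhalf
      _ = (2:ℝ)^s * Gamma (x+1) := by ring
  have hc2 : c ≤ 2 := hc_ub2.trans h2s
  have hc0 : 0 < c := by positivity
  have hcub1 : c - 1 ≤ 3*s := by
    have hu0 : 0 ≤ Real.log 2 * s := mul_nonneg (Real.log_nonneg one_le_two) hs0.le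
    have hu1 : Real.log 2 * s ≤ 3/4 := by
      nlinarith [Real.log_two_lt_d9, Real.log_nonneg (one_le_two (α := ℝ))]
    have h2se : (2:ℝ)^s = Real.exp (Real.log 2 * s) :=
      Real.rpow_def_of_pos (by norm_num) s
    have := exp_upper hu0 hu1
    nlinarith [Real.log_two_lt_d9, hc_ub2]
  have hc_lb : 1 - L * s ≤ c := by
    have h1 := ratio_lower hx0 hs0.le hs1.le
    have h2 : Gamma (x+1) ≤ Gamma (x+1-s) * (x+1)^s := by
      calc Gamma (x+1) ≤ Gamma (x+1-s) * (x+1-s)^s := h1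
        _ ≤ Gamma (x+1-s) * (x+1)^s := by
            gcongr
            · linarith
            · linarith
    have hx1s : (0:ℝ) < (x+1)^s := Real.rpow_pos_of_pos (by linarith) s
    have h3 : ((x+1)^s)⁻¹ ≤ c := by
      rw [hcdef, le_div_iff₀ hGx1, inv_mul_le_iff₀ hx1s]
      linarith
    have h4 : Real.exp (-(L*s)) ≤ ((x+1)^s)⁻¹ := by
      rw [Real.rpow_def_of_pos (by linarith : (0:ℝ) < x+1), ← Real.exp_neg]
    have := Real.add_one_le_exp (-(L*s))
    linarith
  have hc1 : |c - 1| ≤ 3*s + L*s := by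
    rw [abs_le]
    constructor
    · nlinarith
    · nlinarith [mul_nonneg hL0 hs0.le]
  -- bounds on g
  have hg1le : 1 ≤ g := by
    rw [hgdef, one_le_inv_iff₀]
    exact ⟨hGs, gamma_upper hs0.le hs1.le⟩
  have hg3 : g ≤ 3 := by
    rw [hgdef, inv_le_comm₀ hGs (by norm_num)]
    have := gamma_lower3 hs0 hs1
    linarith
  have hgG : Gamma (1+s) * g = 1 := mul_inv_cancel₀ hGs.ne'
  have hgd : |g - 1| ≤ 6*s := by
    have e : g - 1 = (1 - Gamma (1+s)) * g := by rw [sub_mul, one_mul, hgG]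
    have h2s' : 1 - Gamma (1+s) ≤ 2*s := by linarith [gamma_lower1 hs0 hs1.le]
    rw [abs_of_nonneg (by linarith), e]
    rcases le_total (1 - Gamma (1+s)) 0 with h | h
    · nlinarith
    · calc (1 - Gamma (1+s))*g ≤ (2*s)*3 := mul_le_mul h2s' hg3 (by linarith) (by linarith)
        _ = 6*s := by ring
  -- combine
  have key : a*b*c*g - 1 = (a-1)*(b*c*g) + (b-1)*(c*g) + (c-1)*g + (g-1) := by ring
  have hbcg : 0 ≤ b*c*g := by positivity
  have hcg : 0 ≤ c*g := by positivity
  have hcg6 : c*g ≤ 6 := by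
    calc c*g ≤ 2*3 := mul_le_mul hc2 hg3 (by linarith) (by norm_num)
      _ = 6 := by norm_num
  have hbcg6 : b*c*g ≤ 6 := by
    calc b*c*g = b*(c*g) := by ring
      _ ≤ 1*(c*g) := mul_le_mul_of_nonneg_right hb1 hcg
      _ ≤ 6 := by linarith
  calc |a*b*c*g - 1| ≤ |(a-1)*(b*c*g)| + |(b-1)*(c*g)| + |(c-1)*g| + |g-1| := by
        rw [key]
        exact (abs_add_le _ _).trans (by
          gcongr
          exact (abs_add_le _ _).trans (by gcongr; exact abs_add_le _ _))
    _ ≤ s*6 + (3*s)*6 + (3*s + L*s)*3 + 6*s := by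
        have t1 : |(a-1)*(b*c*g)| ≤ s*6 := by
          rw [abs_mul]
          have h1 : |a-1| = s := by
            rw [hadef, show 1-s-1 = -s by ring, abs_neg, abs_of_pos hs0]
          rw [h1, abs_of_nonneg hbcg]
          nlinarith
        have t2 : |(b-1)*(c*g)| ≤ (3*s)*6 := by
          rw [abs_mul]
          have h1 : |b-1| ≤ 3*s := by rw [abs_of_nonpos (by linarith)]; linarith
          rw [abs_of_nonneg hcg]
          nlinarith [abs_nonneg (b-1)]
        have t3 : |(c-1)*g| ≤ (3*s + L*s)*3 := by
          rw [abs_mul, abs_of_nonneg (by linarith : (0:ℝ) ≤ g)]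
          nlinarith [abs_nonneg (c-1), mul_nonneg hL0 hs0.le]
        linarith [hgd]
    _ ≤ 39*s + 3*Real.log (x+1)*s := by rw [← hL]; nlinarith


/-- Lemma `crate`: |A(d,α)·ω_{d-1}/(d(2-α)) − 1| ≤ C log(1+d)(2−α). -/
theorem stmt_0 :
    ∃ C : ℝ, 0 < C ∧ ∀ (d : ℕ), 1 ≤ d → ∀ α : ℝ, α ∈ Set.Ioo (0:ℝ) 2 →
      |(α * Real.Gamma (((d:ℝ) + α)/2) /
          ((2:ℝ) ^ (2 - α) * Real.pi ^ ((d:ℝ)/2) * Real.Gamma (1 - α/2))) *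
        (2 * Real.pi ^ ((d:ℝ)/2) / Real.Gamma ((d:ℝ)/2)) / ((d:ℝ) * (2 - α)) - 1|
        ≤ C * Real.log (1 + (d:ℝ)) * (2 - α) := by
  refine ⟨100, by norm_num, ?_⟩
  intro d hd α hα
  obtain ⟨hα0, hα2⟩ := hα
  have hd1 : (1:ℝ) ≤ (d:ℝ) := by exact_mod_cast hd
  set s : ℝ := 1 - α/2 with hsdef
  set x : ℝ := (d:ℝ)/2 with hxdef
  have hs0 : 0 < s := by rw [hsdef]; linarith
  have hs1 : s < 1 := by rw [hsdef]; linarith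
  have hx : 1/2 ≤ x := by rw [hxdef]; linarith
  have hx0 : 0 < x := by linarith
  have hπ : (0:ℝ) < Real.pi ^ x := Real.rpow_pos_of_pos Real.pi_pos x
  have hGx1 : 0 < Gamma (x+1) := Real.Gamma_pos_of_pos (by linarith)
  have hGs : 0 < Gamma (1+s) := Real.Gamma_pos_of_pos (by linarith)
  have h4sp : (0:ℝ) < (4:ℝ)^s := Real.rpow_pos_of_pos (by norm_num) s
  have e1 : ((d:ℝ) + α)/2 = x + 1 - s := by rw [hxdef, hsdef]; ring
  have e3 : Gamma s = Gamma (1+s) / s := by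
    rw [show (1:ℝ)+s = s+1 by ring, Real.Gamma_add_one hs0.ne']
    field_simp
  have e4 : Gamma x = Gamma (x+1) / x := by
    rw [Real.Gamma_add_one hx0.ne']
    field_simp
  have h24 : (2:ℝ)^(2:ℝ) = 4 := by
    have := Real.rpow_natCast (2:ℝ) 2
    norm_num at this
    linarith
  have e5 : (2:ℝ) ^ (2 - α) = (4:ℝ) ^ s := by
    rw [show (2:ℝ)-α = 2*s by rw [hsdef]; ring, Real.rpow_mul (by norm_num : (0:ℝ) ≤ 2), h24]
  have edd : ((d:ℝ)) = 2*x := by rw [hxdef]; ring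
  have eα : α = 2 - 2*s := by rw [hsdef]; ring
  have hEq : (α * Real.Gamma (x + 1 - s) /
          ((2:ℝ) ^ (2 - α) * Real.pi ^ x * Real.Gamma s)) *
        (2 * Real.pi ^ x / Real.Gamma x) / ((d:ℝ) * (2 - α))
      = (1-s) * ((4:ℝ)^s)⁻¹ * (Gamma (x+1-s)/Gamma (x+1)) * (Gamma (1+s))⁻¹ := by
    rw [e3, e4, e5, edd, eα]
    field_simp
    ring_nf
    have hss : s * s⁻¹ = 1 := mul_inv_cancel₀ hs0.ne'
    linear_combination (Gamma (1 - s + x) - s * Gamma (1 - s + x)) * hss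
  rw [e1, hEq]
  have hkb := key_bound hx hs0 hs1
  have hL1 : Real.log (x+1) ≤ Real.log (1+(d:ℝ)) := by
    apply Real.log_le_log (by linarith)
    rw [hxdef]; linarith
  have hL2 : (1:ℝ)/2 ≤ Real.log (1+(d:ℝ)) := by
    calc (1:ℝ)/2 ≤ Real.log 2 := by linarith [Real.log_two_gt_d9]
      _ ≤ Real.log (1+(d:ℝ)) := Real.log_le_log (by norm_num) (by linarith)
  have h2α : 2 - α = 2*s := by rw [hsdef]; ring
  calc |(1-s) * ((4:ℝ)^s)⁻¹ * (Gamma (x+1-s)/Gamma (x+1)) * (Gamma (1+s))⁻¹ - 1|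
      ≤ 39*s + 3*Real.log (x+1)*s := hkb
    _ ≤ 100 * Real.log (1+(d:ℝ)) * (2-α) := by
        rw [h2α]
        nlinarith [mul_nonneg (by linarith : (0:ℝ) ≤ Real.log (1+(d:ℝ)) - 1/2) hs0.le,
          mul_le_mul_of_nonneg_right hL1 hs0.le]
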